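/- Under the hull hypotheses, the range of the optimal index function over η ∈ [0,∞) is exactly the set of hull vertex indices: {κ(η) : η ≥ 0} = {v_0, v_1, …, v_m}. -/
import Mathlib


open Finset

noncomputable def Gam (γ : ℕ → ℝ) (k : ℕ) : ℝ := ∑ i ∈ Finset.Icc 1 k, γ i

noncomputable def gfun (lam : ℝ) (k : ℕ) : ℝ := (if 1 < k then 1 else 0) + lam * (k : ℝ)

noncomputable def Psi (γ : ℕ → ℝ) (lam η : ℝ) (k : ℕ) : ℝ := gfun lam k - η * Gam γ k

noncomputable def kappa (γ : ℕ → ℝ) (lam : ℝ) (K : ℕ) (η : ℝ) : ℕ :=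
  sInf {k : ℕ | k ≤ K ∧ ∀ j ≤ K, Psi γ lam η k ≤ Psi γ lam η j}

noncomputable def score (γ : ℕ → ℝ) (lam : ℝ) (K : ℕ) (i : ℕ) : ℝ :=
  sInf {η : ℝ | 0 ≤ η ∧ i ≤ kappa γ lam K η}

noncomputable def ell (γ : ℕ → ℝ) (lam η : ℝ) (S : Finset ℕ) : ℝ :=
  (if 1 < S.card then 1 else 0) + lam * (S.card : ℝ) - η * ∑ i ∈ S, γ i

noncomputable def etaSlope (γ : ℕ → ℝ) (lam : ℝ) (v : ℕ → ℕ) (i : ℕ) : ℝ :=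
  (gfun lam (v i) - gfun lam (v (i - 1))) / (Gam γ (v i) - Gam γ (v (i - 1)))

lemma Gam_strictmono {γ : ℕ → ℝ} {K : ℕ}
    (hmono : ∀ i j : ℕ, 1 ≤ i → i ≤ j → j ≤ K → γ j ≤ γ i)
    (hposK : 0 < γ K) {a b : ℕ} (hab : a < b) (hbK : b ≤ K) :
    Gam γ a < Gam γ b := by
  have key : Gam γ a + ∑ i ∈ Finset.Ioc a b, γ i = Gam γ b := by
    unfold Gam
    rw [show Finset.Icc 1 a = Finset.Ioc 0 a from Finset.Icc_add_one_left_eq_Ioc 0 a,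
        show Finset.Icc 1 b = Finset.Ioc 0 b from Finset.Icc_add_one_left_eq_Ioc 0 b]
    exact Finset.sum_Ioc_consecutive γ (Nat.zero_le a) (le_of_lt hab)
  have hpos : 0 < ∑ i ∈ Finset.Ioc a b, γ i := by
    apply Finset.sum_pos
    · intro x hx
      rw [Finset.mem_Ioc] at hx
      exact lt_of_lt_of_le hposK (hmono x K (by omega) (le_trans hx.2 hbK) le_rfl)
    · exact ⟨b, by rw [Finset.mem_Ioc]; exact ⟨hab, le_rfl⟩⟩
  linarith

lemma Psi_step (γ : ℕ → ℝ) (lam η : ℝ) (v : ℕ → ℕ) (j : ℕ)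
    (hne : Gam γ (v j) - Gam γ (v (j - 1)) ≠ 0) :
    Psi γ lam η (v j) = Psi γ lam η (v (j - 1))
      + (etaSlope γ lam v j - η) * (Gam γ (v j) - Gam γ (v (j - 1))) := by
  unfold Psi etaSlope
  rw [sub_mul, div_mul_cancel₀ _ hne]
  ring

lemma kappa_eq_vertex (K : ℕ) (hK : 1 ≤ K) (γ : ℕ → ℝ) (lam : ℝ)
    (hmono : ∀ i j : ℕ, 1 ≤ i → i ≤ j → j ≤ K → γ j ≤ γ i)
    (hposK : 0 < γ K)
    (v : ℕ → ℕ) (m : ℕ) (hv0 : v 0 = 0) (hvm : v m = K)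
    (hvmono : ∀ i, i < m → v i < v (i + 1))
    (heta1 : 0 < etaSlope γ lam v 1)
    (hetamono : ∀ i, 1 ≤ i → i < m → etaSlope γ lam v i < etaSlope γ lam v (i + 1))
    (hhull : ∀ i, 1 ≤ i → i ≤ m → ∀ k, v (i - 1) < k → k < v i →
      gfun lam (v (i - 1)) + etaSlope γ lam v i * (Gam γ k - Gam γ (v (i - 1))) < gfun lam k)
    (η : ℝ) (i : ℕ) (him : i ≤ m)
    (h1 : 0 < i → etaSlope γ lam v i < η)
    (h2 : i < m → η ≤ etaSlope γ lam v (i + 1)) :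
    kappa γ lam K η = v i := by
  -- basic monotonicity of v
  have vmono : ∀ a b : ℕ, a ≤ b → b ≤ m → v a ≤ v b := by
    intro a b hab hbm
    induction b, hab using Nat.le_induction with
    | base => exact le_rfl
    | succ b hab ih => exact le_trans (ih (by omega)) (le_of_lt (hvmono b (by omega)))
  have vsmono : ∀ a b : ℕ, a < b → b ≤ m → v a < v b := by
    intro a b hab hbm
    have h1' : v a ≤ v (b - 1) := vmono a (b - 1) (by omega) (by omega)
    have h2' : v (b - 1) < v (b - 1 + 1) := hvmono (b - 1) (by omega)
    have : b - 1 + 1 = b := by omega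
    rw [this] at h2'
    omega
  have vle : ∀ j, j ≤ m → v j ≤ K := by
    intro j hj
    rcases eq_or_lt_of_le hj with h | h
    · rw [h, hvm]
    · rw [← hvm]; exact le_of_lt (vsmono j m h le_rfl)
  -- slope monotonicity
  have smono : ∀ a b : ℕ, 1 ≤ a → a ≤ b → b ≤ m → etaSlope γ lam v a ≤ etaSlope γ lam v b := by
    intro a b ha hab hbm
    induction b, hab using Nat.le_induction with
    | base => exact le_rfl
    | succ b hab ih =>
      exact le_trans (ih (by omega)) (le_of_lt (hetamono b (by omega) (by omega)))
  have spos : ∀ j, 1 ≤ j → j ≤ m → 0 < etaSlope γ lam v j := by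
    intro j hj1 hjm
    exact lt_of_lt_of_le heta1 (smono 1 j le_rfl hj1 hjm)
  -- consecutive Gam gaps
  have hGlt : ∀ j, 1 ≤ j → j ≤ m → Gam γ (v (j - 1)) < Gam γ (v j) := by
    intro j hj1 hjm
    exact Gam_strictmono hmono hposK (vsmono (j - 1) j (by omega) hjm) (vle j hjm)
  -- chain above i
  have chainHigh : ∀ j, i ≤ j → j ≤ m → Psi γ lam η (v i) ≤ Psi γ lam η (v j) := by
    intro j hij hjm
    induction j, hij using Nat.le_induction with
    | base => exact le_rfl
    | succ j hij ih =>
      have hG := hGlt (j + 1) (by omega) hjm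
      simp only [Nat.add_sub_cancel] at hG
      have hstep := Psi_step γ lam η v (j + 1)
        (by simp only [Nat.add_sub_cancel]; exact sub_ne_zero.mpr (ne_of_gt hG))
      simp only [Nat.add_sub_cancel] at hstep
      have hη : η ≤ etaSlope γ lam v (j + 1) :=
        le_trans (h2 (by omega)) (smono (i + 1) (j + 1) (by omega) (by omega) hjm)
      nlinarith [ih (by omega)]
  -- chain below i (strict)
  have chainLow : ∀ d, d ≤ i → 0 < d → Psi γ lam η (v i) < Psi γ lam η (v (i - d)) := by
    intro d
    induction d with
    | zero => intro _ h; omega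
    | succ d ih =>
      intro hdi _
      have hj1 : 1 ≤ i - d := by omega
      have hG := hGlt (i - d) hj1 (by omega)
      have hstep := Psi_step γ lam η v (i - d) (sub_ne_zero.mpr (ne_of_gt hG))
      have hη : etaSlope γ lam v (i - d) < η :=
        lt_of_le_of_lt (smono (i - d) i hj1 (by omega) him) (h1 (by omega))
      have hidx : i - d - 1 = i - (d + 1) := by omega
      rw [hidx] at hstep hG
      have hbase : Psi γ lam η (v i) ≤ Psi γ lam η (v (i - d)) := by
        rcases Nat.eq_zero_or_pos d with h | h
        · rw [h]; simp
        · exact le_of_lt (ih (by omega) h)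
      nlinarith
  have vertexGe : ∀ j, j ≤ m → Psi γ lam η (v i) ≤ Psi γ lam η (v j) := by
    intro j hjm
    rcases le_or_gt i j with h | h
    · exact chainHigh j h hjm
    · have := chainLow (i - j) (by omega) (by omega)
      have hidx : i - (i - j) = j := by omega
      rw [hidx] at this
      exact le_of_lt this
  -- non-vertex points are strictly worse
  have hmid : ∀ j k, 1 ≤ j → j ≤ m → v (j - 1) < k → k < v j →
      Psi γ lam η (v i) < Psi γ lam η k := by
    intro j k hj1 hjm hk1 hk2
    have hkK : k ≤ K := le_trans (le_of_lt hk2) (vle j hjm)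
    have hhk := hhull j hj1 hjm k hk1 hk2
    have hG1 : Gam γ (v (j - 1)) < Gam γ k := Gam_strictmono hmono hposK hk1 hkK
    have hG2 : Gam γ k < Gam γ (v j) := Gam_strictmono hmono hposK hk2 (vle j hjm)
    have hstep := Psi_step γ lam η v j (sub_ne_zero.mpr (ne_of_gt (lt_trans hG1 hG2)))
    have hPk : Psi γ lam η k = gfun lam k - η * Gam γ k := rfl
    have hPj1 : Psi γ lam η (v (j - 1)) = gfun lam (v (j - 1)) - η * Gam γ (v (j - 1)) := rfl
    rcases le_or_gt j i with hji | hij2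
    · have hsl : etaSlope γ lam v j ≤ etaSlope γ lam v i := smono j i hj1 hji him
      have hηi : etaSlope γ lam v i < η := h1 (by omega)
      have hvij : Psi γ lam η (v i) ≤ Psi γ lam η (v j) := vertexGe j hjm
      nlinarith [mul_nonneg (by linarith : (0:ℝ) ≤ η - etaSlope γ lam v j)
        (by linarith : (0:ℝ) ≤ Gam γ (v j) - Gam γ k)]
    · have hsl : etaSlope γ lam v (i + 1) ≤ etaSlope γ lam v j :=
        smono (i + 1) j (by omega) (by omega) hjm
      have hη : η ≤ etaSlope γ lam v j := le_trans (h2 (by omega)) hsl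
      have hvij : Psi γ lam η (v i) ≤ Psi γ lam η (v (j - 1)) := vertexGe (j - 1) (by omega)
      nlinarith [mul_nonneg (by linarith : (0:ℝ) ≤ etaSlope γ lam v j - η)
        (by linarith : (0:ℝ) ≤ Gam γ k - Gam γ (v (j - 1)))]
  -- decomposition of any k ≤ K
  have hm1 : 1 ≤ m := by
    by_contra h
    have : m = 0 := by omega
    rw [this, hv0] at hvm
    omega
  have hdecomp : ∀ k, k ≤ K →
      (∃ j ≤ m, v j = k) ∨ (∃ j, 1 ≤ j ∧ j ≤ m ∧ v (j - 1) < k ∧ k < v j) := by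
    intro k hk
    by_cases hvk : ∃ j ≤ m, v j = k
    · left; exact hvk
    · right
      classical
      set j0 := Nat.findGreatest (fun j => v j ≤ k) m with hj0def
      have hj0le : j0 ≤ m := Nat.findGreatest_le m
      have hvj0 : v j0 ≤ k := by
        rcases Nat.eq_zero_or_pos j0 with h | h
        · rw [h, hv0]; exact Nat.zero_le k
        · exact Nat.findGreatest_of_ne_zero (P := fun j => v j ≤ k) (n := m) hj0def.symm (by omega)
      have hne : v j0 ≠ k := fun h => hvk ⟨j0, hj0le, h⟩
      have hj0m : j0 < m := by
        rcases eq_or_lt_of_le hj0le with h | h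
        · exfalso; rw [h, hvm] at hvj0 hne; omega
        · exact h
      have hnot : ¬ (v (j0 + 1) ≤ k) :=
        Nat.findGreatest_is_greatest (P := fun j => v j ≤ k) (n := m) (by omega) (by omega)
      refine ⟨j0 + 1, by omega, by omega, ?_, by omega⟩
      simp only [Nat.add_sub_cancel]
      omega
  have hviK : v i ≤ K := vle i him
  have hminvi : ∀ k, k ≤ K → Psi γ lam η (v i) ≤ Psi γ lam η k := by
    intro k hk
    rcases hdecomp k hk with ⟨j, hjm, rfl⟩ | ⟨j, hj1, hjm, ha, hb⟩
    · exact vertexGe j hjm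
    · exact le_of_lt (hmid j k hj1 hjm ha hb)
  have hstrictbelow : ∀ k, k < v i → Psi γ lam η (v i) < Psi γ lam η k := by
    intro k hk
    have hkK : k ≤ K := by omega
    rcases hdecomp k hkK with ⟨j, hjm, rfl⟩ | ⟨j, hj1, hjm, ha, hb⟩
    · have hji : j < i := by
        by_contra h
        have := vmono i j (by omega) hjm
        omega
      have := chainLow (i - j) (by omega) (by omega)
      have hidx : i - (i - j) = j := by omega
      rwa [hidx] at this
    · exact hmid j k hj1 hjm ha hb
  have hmem : v i ∈ {k : ℕ | k ≤ K ∧ ∀ j ≤ K, Psi γ lam η k ≤ Psi γ lam η j} :=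
    ⟨hviK, fun j hj => hminvi j hj⟩
  unfold kappa
  apply le_antisymm
  · exact Nat.sInf_le hmem
  · apply le_csInf ⟨v i, hmem⟩
    intro b hb
    by_contra h
    push_neg at h
    exact absurd (hb.2 (v i) hviK) (not_le.mpr (hstrictbelow b h))

/-- Under the hull hypotheses, the range of the optimal index function over η ≥ 0 is
exactly the set of hull vertex indices. -/
theorem stmt11 (K : ℕ) (hK : 1 ≤ K) (γ : ℕ → ℝ) (lam : ℝ) (hlam : 0 ≤ lam)
    (hmono : ∀ i j : ℕ, 1 ≤ i → i ≤ j → j ≤ K → γ j ≤ γ i)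
    (hposK : 0 < γ K)
    (hsum : ∑ i ∈ Finset.Icc 1 K, γ i = 1)
    (v : ℕ → ℕ) (m : ℕ) (hv0 : v 0 = 0) (hvm : v m = K)
    (hvmono : ∀ i, i < m → v i < v (i + 1))
    (heta1 : 0 < etaSlope γ lam v 1)
    (hetamono : ∀ i, 1 ≤ i → i < m → etaSlope γ lam v i < etaSlope γ lam v (i + 1))
    (hhull : ∀ i, 1 ≤ i → i ≤ m → ∀ k, v (i - 1) < k → k < v i →
      gfun lam (v (i - 1)) + etaSlope γ lam v i * (Gam γ k - Gam γ (v (i - 1))) < gfun lam k) :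
    {k : ℕ | ∃ η : ℝ, 0 ≤ η ∧ kappa γ lam K η = k} = {k : ℕ | ∃ i ≤ m, v i = k} := by
  classical
  have smono : ∀ a b : ℕ, 1 ≤ a → a ≤ b → b ≤ m → etaSlope γ lam v a ≤ etaSlope γ lam v b := by
    intro a b ha hab hbm
    induction b, hab using Nat.le_induction with
    | base => exact le_rfl
    | succ b hab ih =>
      exact le_trans (ih (by omega)) (le_of_lt (hetamono b (by omega) (by omega)))
  have spos : ∀ j, 1 ≤ j → j ≤ m → 0 < etaSlope γ lam v j := by
    intro j hj1 hjm
    exact lt_of_lt_of_le heta1 (smono 1 j le_rfl hj1 hjm)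
  ext k
  simp only [Set.mem_setOf_eq]
  constructor
  · rintro ⟨η, hη0, hκ⟩
    set i := Nat.findGreatest (fun j => etaSlope γ lam v j < η) m with hidef
    have him : i ≤ m := Nat.findGreatest_le m
    refine ⟨i, him, ?_⟩
    rw [← hκ]
    refine (kappa_eq_vertex K hK γ lam hmono hposK v m hv0 hvm hvmono heta1 hetamono hhull
      η i him ?_ ?_).symm
    · intro hi
      exact Nat.findGreatest_of_ne_zero (P := fun j => etaSlope γ lam v j < η) (n := m)
        hidef.symm (by omega)
    · intro him'
      have := Nat.findGreatest_is_greatest (P := fun j => etaSlope γ lam v j < η) (n := m)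
        (k := i + 1) (by omega) (by omega)
      exact le_of_not_gt this
  · rintro ⟨i, him, rfl⟩
    by_cases hi0 : i = 0
    · subst hi0
      refine ⟨0, le_rfl, kappa_eq_vertex K hK γ lam hmono hposK v m hv0 hvm hvmono heta1
        hetamono hhull 0 0 (by omega) (by omega) ?_⟩
      intro hm'
      exact le_of_lt (spos 1 le_rfl (by omega))
    · have hi1 : 1 ≤ i := by omega
      have hpi : 0 < etaSlope γ lam v i := spos i hi1 him
      by_cases him' : i = m
      · refine ⟨etaSlope γ lam v i + 1, by linarith,
          kappa_eq_vertex K hK γ lam hmono hposK v m hv0 hvm hvmono heta1 hetamono hhull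
          _ i him (fun _ => by linarith) (fun h => by omega)⟩
      · have hlt : etaSlope γ lam v i < etaSlope γ lam v (i + 1) :=
          hetamono i hi1 (by omega)
        refine ⟨(etaSlope γ lam v i + etaSlope γ lam v (i + 1)) / 2, by linarith,
          kappa_eq_vertex K hK γ lam hmono hposK v m hv0 hvm hvmono heta1 hetamono hhull
          _ i him (fun _ => by linarith) (fun _ => by linarith)⟩
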